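/- Let A be an n×n symmetric matrix over a field. Then rank(A) = n if and only if det(A) ≠ 0, and if rank(A) < n then there exists an index v such that the principal submatrix obtained by deleting row and column v has the same rank as A. -/

import Mathlib

open Matrix Module Submodule

/-- A symmetric matrix over a field has full rank iff its determinant is nonzero, and if it
is not of full rank then some co-order-one principal submatrix has the same rank. -/
theorem stmt_8 {n : ℕ} {K : Type*} [Field K]
    (A : Matrix (Fin n) (Fin n) K) (hsymm : A.IsSymm) :
    (A.rank = n ↔ A.det ≠ 0) ∧
      (A.rank < n → ∃ v : Fin n,
        (A.submatrix (Subtype.val : {w : Fin n // w ≠ v} → Fin n)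
          (Subtype.val : {w : Fin n // w ≠ v} → Fin n)).rank = A.rank) := by
  constructor
  · constructor
    · intro hr hd
      obtain ⟨v, hv, hAv⟩ := (Matrix.exists_mulVec_eq_zero_iff).mpr hd
      have hker : v ∈ LinearMap.ker A.mulVecLin := by simpa using hAv
      have h1 : 0 < finrank K (LinearMap.ker A.mulVecLin) := by
        rw [finrank_pos_iff]
        exact nontrivial_of_ne ⟨v, hker⟩ 0 (by simpa [Subtype.ext_iff] using hv)
      have h2 := LinearMap.finrank_range_add_finrank_ker A.mulVecLin
      rw [Module.finrank_pi, Fintype.card_fin] at h2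
      have : A.rank + finrank K (LinearMap.ker A.mulVecLin) = n := h2
      omega
    · intro hd
      have : IsUnit A := (Matrix.isUnit_iff_isUnit_det A).mpr (isUnit_iff_ne_zero.mpr hd)
      rw [Matrix.rank_of_isUnit A this, Fintype.card_fin]
  · intro hlt
    -- rows are linearly dependent
    have hdep : ¬ LinearIndependent K A := by
      intro h
      have := linearIndependent_iff_card_eq_finrank_span.mp h
      rw [Fintype.card_fin] at this
      rw [A.rank_eq_finrank_span_row] at hlt
      exact absurd this (by rw [Set.finrank]; change finrank K (span K (Set.range A)) < n at hlt; omega)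
    obtain ⟨c, hsum, v, hcv⟩ := Fintype.not_linearIndependent_iff.mp hdep
    refine ⟨v, ?_⟩
    set T := {w : Fin n // w ≠ v}
    -- A v is in the span of the other rows
    have hv : A v ∈ span K (Set.range fun w : T => A w.val) := by
      have : c v • A v = -∑ i ∈ Finset.univ.erase v, c i • A i := by
        have := Finset.add_sum_erase Finset.univ (fun i => c i • A i) (Finset.mem_univ v)
        rw [hsum] at this
        linear_combination (norm := module) this
      have h2 : A v = (c v)⁻¹ • (-∑ i ∈ Finset.univ.erase v, c i • A i) := by
        rw [← this, smul_smul, inv_mul_cancel₀ hcv, one_smul]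
      rw [h2]
      refine smul_mem _ _ (neg_mem (sum_mem fun i hi => smul_mem _ _ (subset_span ?_)))
      exact ⟨⟨i, Finset.ne_of_mem_erase hi⟩, rfl⟩
    -- span of all rows = span of rows except v
    have hspan : ∀ (M : Matrix (Fin n) (Fin n) K),
        M v ∈ span K (Set.range fun w : T => M w.val) →
        span K (Set.range M) = span K (Set.range fun w : T => M w.val) := by
      intro M hM
      apply le_antisymm
      · rw [span_le]
        rintro x ⟨i, rfl⟩
        by_cases hi : i = v
        · subst hi; exact hM
        · exact subset_span ⟨⟨i, hi⟩, rfl⟩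
      · exact span_mono (by rintro x ⟨w, rfl⟩; exact ⟨w.val, rfl⟩)
    -- the restriction linear map
    let f : (Fin n → K) →ₗ[K] (T → K) := LinearMap.funLeft K K Subtype.val
    have hAt : Aᵀ = A := hsymm
    -- rank of the principal submatrix via columns
    set C := A.submatrix (Subtype.val : T → Fin n) (Subtype.val : T → Fin n)
    set B := A.submatrix (Subtype.val : T → Fin n) (id : Fin n → Fin n)
    have hCt : Set.range Cᵀ = f '' (Set.range fun w : T => Aᵀ w.val) := by
      ext x
      constructor
      · rintro ⟨w, rfl⟩; exact ⟨Aᵀ w.val, ⟨w, rfl⟩, rfl⟩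
      · rintro ⟨y, ⟨w, rfl⟩, rfl⟩; exact ⟨w, rfl⟩
    have hBt : Set.range Bᵀ = f '' (Set.range Aᵀ) := by
      ext x
      constructor
      · rintro ⟨j, rfl⟩; exact ⟨Aᵀ j, ⟨j, rfl⟩, rfl⟩
      · rintro ⟨y, ⟨j, rfl⟩, rfl⟩; exact ⟨j, rfl⟩
    have hCB : C.rank = B.rank := by
      rw [Matrix.rank_eq_finrank_span_cols, Matrix.rank_eq_finrank_span_cols]
      change finrank K (span K (Set.range Cᵀ)) = finrank K (span K (Set.range Bᵀ))
      rw [hCt, hBt, ← Submodule.map_span, ← Submodule.map_span,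
        hspan Aᵀ (by rw [hAt]; exact hv)]
    have hBA : B.rank = A.rank := by
      rw [Matrix.rank_eq_finrank_span_row, Matrix.rank_eq_finrank_span_row]
      have : Set.range B = Set.range fun w : T => A w.val := rfl
      change finrank K (span K (Set.range B)) = finrank K (span K (Set.range A))
      rw [this, hspan A hv]
    rw [hCB, hBA]
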